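/- Let k be a unital ring and n ≥ 2 an integer. Let J be a Grothendieck topology on the opposite category RingCatᵒᵖ of the category of unital rings, and suppose that the sieve on the object of RingCatᵒᵖ corresponding to kⁿ generated by the n morphisms opposite to the projections πᵢ : kⁿ → k (i = 1,…,n) is a J-covering sieve. Then for every ring R equipped with a unital ring homomorphism k → R, the sieve on the object of RingCatᵒᵖ corresponding to Mₙ(R) generated by the single morphism opposite to the unique ring homomorphism Mₙ(R) → 0 (where 0 is the trivial ring) is a J-covering sieve. -/

import Mathlib

universe u

open CategoryTheory Opposite

/-- The unique ring homomorphism from a ring to the trivial (one-element) ring. -/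
def toTrivialRingHom (R : Type u) [Ring R] : R →+* PUnit.{u + 1} where
  toFun _ := PUnit.unit
  map_one' := rfl
  map_mul' _ _ := rfl
  map_zero' := rfl
  map_add' _ _ := rfl

theorem stmt_3 (k : Type u) [Ring k] (n : ℕ) (hn : 2 ≤ n)
    (J : GrothendieckTopology RingCat.{u}ᵒᵖ)
    (hJ : Sieve.generate
        (Presieve.ofArrows (fun _ : Fin n => op (RingCat.of k))
          (fun i => (RingCat.ofHom (Pi.evalRingHom (fun _ : Fin n => k) i)).op)) ∈
      J (op (RingCat.of (Fin n → k))))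
    (R : Type u) [Ring R] (φ : k →+* R) :
    Sieve.generate
        (Presieve.ofArrows (fun _ : PUnit.{1} => op (RingCat.of PUnit.{u + 1}))
          (fun _ => (RingCat.ofHom (toTrivialRingHom (Matrix (Fin n) (Fin n) R))).op)) ∈
      J (op (RingCat.of (Matrix (Fin n) (Fin n) R))) := by
  -- the "diagonal" ring hom kⁿ → Mₙ(R)
  set d : (Fin n → k) →+* Matrix (Fin n) (Fin n) R :=
    (φ.mapMatrix).comp (Matrix.diagonalRingHom (Fin n) k) with hd
  have key : ∀ j : Fin n, d (Pi.single j (1 : k)) = Matrix.single j j (1 : R) := by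
    intro j
    have h1 : Matrix.diagonal (Pi.single j (1 : k)) = Matrix.single j j (1 : k) := by
      ext a b
      rcases eq_or_ne a b with rfl | hab
      · rcases eq_or_ne j a with rfl | haj
        · simp [Matrix.single]
        · simp [Matrix.single, Pi.single_apply, haj, fun h : a = j => haj h.symm]
      · rw [Matrix.diagonal_apply_ne _ hab]
        exact ((if_neg (fun h : j = a ∧ j = b => hab (h.1.symm.trans h.2))).symm : (0 : k) = _)
    show φ.mapMatrix (Matrix.diagonal (Pi.single j (1 : k))) = _
    rw [h1]
    ext a b
    simp [Matrix.single, apply_ite φ]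
  set D : op (RingCat.of (Matrix (Fin n) (Fin n) R)) ⟶ op (RingCat.of (Fin n → k)) :=
    (RingCat.ofHom d).op with hD
  refine J.superset_covering ?_ (J.pullback_stable D hJ)
  rintro Z f ⟨Y, g, h, ⟨i⟩, hfac⟩
  -- f : Z ⟶ op Mₙ(R), so f.unop : Mₙ(R) → Z.unop
  -- hfac : g ≫ πᵢ.op = f ≫ D in the opposite category
  have hfac' : (f.unop.hom : Matrix (Fin n) (Fin n) R →+* Z.unop).comp d
      = (g.unop.hom : k →+* Z.unop).comp (Pi.evalRingHom (fun _ : Fin n => k) i) := by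
    have := congrArg (fun x => x.unop.hom) hfac
    exact this.symm
  set t : Matrix (Fin n) (Fin n) R →+* (Z.unop : Type u) := f.unop.hom with ht
  have hteval : ∀ x : Fin n → k, t (d x) = g.unop.hom (x i) := fun x =>
    congrArg (fun ψ => ψ x) hfac'
  -- pick an index different from i
  haveI : Nontrivial (Fin n) :=
    ⟨⟨⟨0, by omega⟩, ⟨1, by omega⟩, by simp [Fin.ext_iff]⟩⟩
  obtain ⟨j, hji⟩ := exists_ne i
  have hii : t (Matrix.single i i (1 : R)) = 1 := by
    rw [← key i, hteval]
    simp
  have hjj : t (Matrix.single j j (1 : R)) = 0 := by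
    rw [← key j, hteval]
    simp [Pi.single_apply, (Ne.symm hji : i ≠ j)]
  have hdecomp : Matrix.single i i (1 : R) =
      Matrix.single i j 1 *
        (Matrix.single j j 1 * Matrix.single j i 1) := by
    simp
  have h10 : (1 : (Z.unop : Type u)) = 0 := by
    rw [← hii, hdecomp, map_mul, map_mul, hjj, zero_mul, mul_zero]
  haveI : Subsingleton (Z.unop : Type u) := subsingleton_of_zero_eq_one h10.symm
  refine ⟨op (RingCat.of PUnit.{u + 1}),
    (RingCat.ofHom
      ({ toFun := fun _ => 0, map_one' := h10.symm, map_mul' := fun _ _ => (mul_zero 0).symm,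
         map_zero' := rfl, map_add' := fun _ _ => (add_zero 0).symm } :
        PUnit.{u + 1} →+* (Z.unop : Type u))).op,
    (RingCat.ofHom (toTrivialRingHom (Matrix (Fin n) (Fin n) R))).op,
    ⟨PUnit.unit⟩, ?_⟩
  apply Quiver.Hom.unop_inj
  exact RingCat.hom_ext <| RingHom.ext fun x => Subsingleton.elim _ _
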